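/- Let n ≥ 5 and let χ : E(K_n) → Z_3 be an edge-coloring such that there is no 4-cycle uvwz in K_n with χ(uv) + χ(vw) ≠ χ(wz) + χ(zu). Then χ is monochromatic, i.e., all edges of K_n receive the same color. -/
import Mathlib


open Finset

private lemma zmod3_cancel : ∀ a b : ZMod 3, a + a = b + b → a = b := by decide

private lemma nodup4 {α : Type*} {a b c d : α} (h1 : a ≠ b) (h2 : a ≠ c) (h3 : a ≠ d)
    (h4 : b ≠ c) (h5 : b ≠ d) (h6 : c ≠ d) : ([a, b, c, d] : List α).Nodup := by
  simp [h1, h2, h3, h4, h5, h6]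

theorem stmt13 (n : ℕ) (hn : 5 ≤ n) (χ : Sym2 (Fin n) → ZMod 3)
    (hcyc : ∀ u v w z : Fin n, ([u, v, w, z] : List (Fin n)).Nodup →
      χ s(u, v) + χ s(v, w) = χ s(w, z) + χ s(z, u)) :
    ∃ m : ZMod 3, ∀ u v : Fin n, u ≠ v → χ s(u, v) = m := by
  -- key: disjoint edges have equal color
  have key : ∀ u v w z : Fin n, u ≠ v → w ≠ z → u ≠ w → u ≠ z → v ≠ w → v ≠ z →
      χ s(u, v) = χ s(w, z) := by
    intro u v w z huv hwz huw huz hvw hvz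
    have h1 := hcyc w u v z (nodup4 huw.symm hvw.symm hwz huv huz hvz)
    have h2 := hcyc u w z v (nodup4 huw huz huv hwz hvw.symm hvz.symm)
    rw [Sym2.eq_swap (a := w) (b := u)] at h1
    rw [Sym2.eq_swap (a := z) (b := v), Sym2.eq_swap (a := v) (b := u)] at h2
    -- h1 : χ s(u,w) + χ s(u,v) = χ s(v,z) + χ s(z,w)
    -- h2 : χ s(u,w) + χ s(w,z) = χ s(v,z) + χ s(u,v)
    apply zmod3_cancel
    have hzw : χ s(z, w) = χ s(w, z) := by rw [Sym2.eq_swap]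
    have h3 : χ s(u, v) + χ s(u, v) + (χ s(u, w) + χ s(v, z))
        = χ s(w, z) + χ s(w, z) + (χ s(u, w) + χ s(v, z)) := by
      linear_combination h1 - h2 + hzw
    exact add_right_cancel h3
  -- fresh vertices outside any 3-element set
  have fresh : ∀ x y t : Fin n, ∃ c d : Fin n,
      c ≠ d ∧ c ≠ x ∧ c ≠ y ∧ c ≠ t ∧ d ≠ x ∧ d ≠ y ∧ d ≠ t := by
    intro x y t
    have hcard : 1 < ({x, y, t}ᶜ : Finset (Fin n)).card := by
      have h := Finset.card_compl ({x, y, t} : Finset (Fin n))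
      rw [Fintype.card_fin] at h
      have h3 : ({x, y, t} : Finset (Fin n)).card ≤ 3 := Finset.card_le_three
      omega
    obtain ⟨c, hc, d, hd, hcd⟩ := Finset.one_lt_card.mp hcard
    simp only [Finset.mem_compl, Finset.mem_insert, Finset.mem_singleton, not_or] at hc hd
    exact ⟨c, d, hcd, hc.1, hc.2.1, hc.2.2, hd.1, hd.2.1, hd.2.2⟩
  -- any two edges are equal
  have main : ∀ u v a b : Fin n, u ≠ v → a ≠ b → χ s(u, v) = χ s(a, b) := by
    intro u v a b huv hab
    by_cases h : a ≠ u ∧ a ≠ v ∧ b ≠ u ∧ b ≠ v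
    · exact key u v a b huv hab (Ne.symm h.1) (Ne.symm h.2.2.1) (Ne.symm h.2.1)
        (Ne.symm h.2.2.2)
    · -- the edges share a vertex: use two vertices fresh to {u, v, a, b}
      have hsub : ∃ p q r : Fin n, ∀ x : Fin n, (x = u ∨ x = v ∨ x = a ∨ x = b) →
          (x = p ∨ x = q ∨ x = r) := by
        push_neg at h
        rcases eq_or_ne a u with rfl | hau
        · exact ⟨a, v, b, by tauto⟩
        · rcases eq_or_ne a v with rfl | hav
          · exact ⟨u, a, b, by tauto⟩
          · rcases eq_or_ne b u with rfl | hbu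
            · exact ⟨b, v, a, by tauto⟩
            · have := h hau hav hbu; subst this; exact ⟨u, b, a, by tauto⟩
      obtain ⟨p, q, r, hpqr⟩ := hsub
      obtain ⟨c, d, hcd, hcp, hcq, hcr, hdp, hdq, hdr⟩ := fresh p q r
      have hcfree : ∀ x : Fin n, (x = u ∨ x = v ∨ x = a ∨ x = b) → x ≠ c := by
        intro x hx heq
        rcases hpqr x hx with rfl | rfl | rfl <;> subst heq <;> simp_all
      have hdfree : ∀ x : Fin n, (x = u ∨ x = v ∨ x = a ∨ x = b) → x ≠ d := by
        intro x hx heq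
        rcases hpqr x hx with rfl | rfl | rfl <;> subst heq <;> simp_all
      have e1 : χ s(u, v) = χ s(c, d) :=
        key u v c d huv hcd (hcfree u (Or.inl rfl)) (hdfree u (Or.inl rfl))
          (hcfree v (Or.inr (Or.inl rfl))) (hdfree v (Or.inr (Or.inl rfl)))
      have e2 : χ s(a, b) = χ s(c, d) :=
        key a b c d hab hcd (hcfree a (Or.inr (Or.inr (Or.inl rfl))))
          (hdfree a (Or.inr (Or.inr (Or.inl rfl))))
          (hcfree b (Or.inr (Or.inr (Or.inr rfl)))) (hdfree b (Or.inr (Or.inr (Or.inr rfl))))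
      rw [e1, e2]
  refine ⟨χ s(⟨0, by omega⟩, ⟨1, by omega⟩), fun u v huv => main u v _ _ huv ?_⟩
  simp [Fin.ext_iff]
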